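/- Let σ ∈ S_k and τ ∈ S_n with σ ≤ τ, and let ⟨σ⟩ be an occurrence of σ in τ. The occurrence poset [⟨σ⟩, τ] is a boolean algebra if and only if at no point are there letters x and x + 1 adjacent in ρ ∖ ⟨σ⟩ for some ρ ∈ [⟨σ⟩, τ]; that is, [⟨σ⟩, τ] is boolean if and only if for every ρ ∈ [⟨σ⟩, τ] there is no pair of consecutive values x, x+1 that occupy adjacent positions in ρ with both x and x+1 lying outside the occurrence ⟨σ⟩. -/

import Mathlib

/-- `f` gives an occurrence of the pattern `σ` in `τ`: the positions `f 0 < f 1 < ⋯`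
carry letters of `τ` in the same relative order as `σ`. -/
def IsOccurrence {k n : ℕ} (σ : Equiv.Perm (Fin k)) (τ : Equiv.Perm (Fin n))
    (f : Fin k → Fin n) : Prop :=
  StrictMono f ∧ ∀ i j : Fin k, σ i < σ j ↔ τ (f i) < τ (f j)

/-- Two sets of kept positions `S, S'` (each containing the marked positions `A`)
determine the same element of the occurrence poset: the words of `τ` read along `S`
and along `S'` are order isomorphic, with the marked positions corresponding. -/
def OccEquiv {n : ℕ} (τ : Equiv.Perm (Fin n)) (A S S' : Finset (Fin n)) : Prop :=
  ∃ g : {x // x ∈ S} ≃o {x // x ∈ S'},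
    (∀ a b : {x // x ∈ S}, τ a.1 < τ b.1 ↔ τ (g a).1 < τ (g b).1) ∧
    (∀ a : {x // x ∈ S}, a.1 ∈ A ↔ (g a).1 ∈ A)

/-- Representatives of elements of the occurrence poset with marked positions `A`
and ground set `U`: sets of kept positions between `A` and `U`. -/
def OccCarrier {n : ℕ} (A U : Finset (Fin n)) := {S : Finset (Fin n) // A ⊆ S ∧ S ⊆ U}

/-- The occurrence poset `[⟨σ⟩, τ]` (with ground set `U`): kept-position sets modulo
order isomorphism respecting the marked occurrence. -/
def OccPoset {n : ℕ} (τ : Equiv.Perm (Fin n)) (A U : Finset (Fin n)) :=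
  Quot (fun S S' : OccCarrier A U => OccEquiv τ A S.1 S'.1)

def occMk {n : ℕ} (τ : Equiv.Perm (Fin n)) (A U : Finset (Fin n)) (S : OccCarrier A U) :
    OccPoset τ A U :=
  Quot.mk _ S

/-- The partial order of the occurrence poset: deletion of unmarked letters. -/
def occLE {n : ℕ} (τ : Equiv.Perm (Fin n)) (A U : Finset (Fin n))
    (q q' : OccPoset τ A U) : Prop :=
  ∃ S S' : OccCarrier A U, q = occMk τ A U S ∧ q' = occMk τ A U S' ∧ S.1 ⊆ S'.1

/-- The bottom element `⟨σ⟩` of the occurrence poset. -/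
def occBot {n : ℕ} (τ : Equiv.Perm (Fin n)) (A U : Finset (Fin n)) (h : A ⊆ U) :
    OccPoset τ A U :=
  occMk τ A U ⟨A, subset_rfl, h⟩

/-- The top element `τ` of the occurrence poset. -/
def occTop {n : ℕ} (τ : Equiv.Perm (Fin n)) (A U : Finset (Fin n)) (h : A ⊆ U) :
    OccPoset τ A U :=
  occMk τ A U ⟨U, h, subset_rfl⟩

/-- `J` is an interval block of the pattern of `τ` restricted to the kept positions `S`:
`J` consists of at least two kept positions, consecutive among `S` both in position and
in value. -/
def IsBlockIn {n : ℕ} (τ : Equiv.Perm (Fin n)) (S J : Finset (Fin n)) : Prop :=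
  J ⊆ S ∧ 2 ≤ J.card ∧
    (∀ x ∈ J, ∀ y ∈ J, ∀ z ∈ S, x ≤ z → z ≤ y → z ∈ J) ∧
    (∀ x ∈ J, ∀ y ∈ J, ∀ z ∈ S, τ x ≤ τ z → τ z ≤ τ y → z ∈ J)

/-- The pair (marked occurrence `A`, permutation given by kept positions `S`) has an
interval block: an interval block disjoint from the occurrence. -/
def PairHasBlock {n : ℕ} (τ : Equiv.Perm (Fin n)) (A S : Finset (Fin n)) : Prop :=
  ∃ J : Finset (Fin n), IsBlockIn τ S J ∧ ∀ p ∈ J, p ∉ A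

/-- An element of the occurrence poset is interval free if (a representative of) it has
no interval block disjoint from the marked occurrence. -/
def occIntervalFree {n : ℕ} (τ : Equiv.Perm (Fin n)) (A U : Finset (Fin n))
    (q : OccPoset τ A U) : Prop :=
  ∃ S : OccCarrier A U, q = occMk τ A U S ∧ ¬ PairHasBlock τ A S.1

theorem OccEquiv.card_eq {n : ℕ} {τ : Equiv.Perm (Fin n)} {A S S' : Finset (Fin n)}
    (h : OccEquiv τ A S S') : S.card = S'.card := by
  obtain ⟨g, -, -⟩ := h
  simpa using Fintype.card_congr g.toEquiv

/-- The rank of an element of the occurrence poset: its number of letters minus `k`. -/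
def occRank {n : ℕ} (τ : Equiv.Perm (Fin n)) (A U : Finset (Fin n)) (k : ℕ) :
    OccPoset τ A U → ℕ :=
  Quot.lift (fun S => S.1.card - k) (fun S S' h => by
    have hc := OccEquiv.card_eq h
    show S.1.card - k = S'.1.card - k
    omega)

/-- Positions `p` and `q` lie in the same region: no position between them (inclusive)
is a marked position. -/
def SameRegion {n : ℕ} (A : Finset (Fin n)) (p q : Fin n) : Prop :=
  ∀ z : Fin n, min p q ≤ z → z ≤ max p q → z ∉ A

/-- The pair (occurrence with marked positions `A`, `τ`) is separated: any two letters in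
the same region are separated in value by a letter of the occurrence. -/
def Separated {n : ℕ} (τ : Equiv.Perm (Fin n)) (A : Finset (Fin n)) : Prop :=
  ∀ p q : Fin n, SameRegion A p q → τ p < τ q → ∃ a ∈ A, τ p < τ a ∧ τ a < τ q

/-- The letters at positions `p, q` (with `τ p < τ q`) are similar: same region, and no
letter of the occurrence lies strictly between them in value. -/
def SimilarPos {n : ℕ} (τ : Equiv.Perm (Fin n)) (A : Finset (Fin n)) (p q : Fin n) : Prop :=
  SameRegion A p q ∧ τ p < τ q ∧ ∀ a ∈ A, ¬ (τ p < τ a ∧ τ a < τ q)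

/-- A group of similar letters: at least two letters, pairwise similar. -/
def IsSimilarGroup {n : ℕ} (τ : Equiv.Perm (Fin n)) (A : Finset (Fin n))
    (G : Finset (Fin n)) : Prop :=
  2 ≤ G.card ∧ ∀ p ∈ G, ∀ q ∈ G, τ p < τ q → SimilarPos τ A p q

/-- A maximal group of similar letters: one contained in no strictly larger group. -/
def IsMaxSimilarGroup {n : ℕ} (τ : Equiv.Perm (Fin n)) (A : Finset (Fin n))
    (G : Finset (Fin n)) : Prop :=
  IsSimilarGroup τ A G ∧ ∀ G' : Finset (Fin n), IsSimilarGroup τ A G' → G ⊆ G' → G' = G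

/-- The occurrence poset is a boolean algebra: isomorphic to the poset of all subsets of
a finite set, ordered by inclusion. -/
def IsBooleanOccPoset {n : ℕ} (τ : Equiv.Perm (Fin n)) (A U : Finset (Fin n)) : Prop :=
  ∃ (m : ℕ) (e : OccPoset τ A U ≃ Finset (Fin m)),
    ∀ q q' : OccPoset τ A U, occLE τ A U q q' ↔ e q ⊆ e q'

/-- The pattern poset `P`: permutations of every length, a permutation of length `m` being
an element of `Equiv.Perm (Fin m)` (its standard form). -/
def PatternPoset := Σ m : ℕ, Equiv.Perm (Fin m)

/-- The order of the pattern poset: pattern containment. -/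
def patternLE (a b : PatternPoset) : Prop :=
  ∃ f : Fin a.1 → Fin b.1, IsOccurrence a.2 b.2 f

/-- `b` covers `a` in the pattern poset: `a < b` and `b` has one letter more than `a`. -/
def patternCovers (a b : PatternPoset) : Prop :=
  patternLE a b ∧ a ≠ b ∧ b.1 = a.1 + 1


/-- Some element of the occurrence poset, given by the kept positions `S`, has two letters
with consecutive values, occupying adjacent positions, both outside the marked occurrence. -/
def HasAdjacentPair {n : ℕ} (τ : Equiv.Perm (Fin n)) (A S : Finset (Fin n)) : Prop :=
  ∃ p ∈ S, ∃ q ∈ S, p ∉ A ∧ q ∉ A ∧ p ≠ q ∧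
    (∀ s ∈ S, ¬ (min p q < s ∧ s < max p q)) ∧
    (∀ s ∈ S, ¬ (min (τ p) (τ q) < τ s ∧ τ s < max (τ p) (τ q)))

open Finset

section MyAux
variable {n : ℕ} {τ : Equiv.Perm (Fin n)} {A : Finset (Fin n)}

lemma myOccEquiv_refl (τ : Equiv.Perm (Fin n)) (A S : Finset (Fin n)) : OccEquiv τ A S S :=
  ⟨OrderIso.refl _, fun _ _ => Iff.rfl, fun _ => Iff.rfl⟩

lemma myOccEquiv_symm {S S' : Finset (Fin n)} (h : OccEquiv τ A S S') : OccEquiv τ A S' S := by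
  obtain ⟨g, h1, h2⟩ := h
  refine ⟨g.symm, fun a b => ?_, fun a => ?_⟩
  · have := h1 (g.symm a) (g.symm b)
    simpa using this.symm
  · have := h2 (g.symm a)
    simpa using this.symm

lemma myOccEquiv_trans {S S' S'' : Finset (Fin n)} (h : OccEquiv τ A S S')
    (h' : OccEquiv τ A S' S'') : OccEquiv τ A S S'' := by
  obtain ⟨g, h1, h2⟩ := h
  obtain ⟨g', h1', h2'⟩ := h'
  exact ⟨g.trans g', fun a b => (h1 a b).trans (h1' _ _), fun a => (h2 a).trans (h2' _)⟩

lemma myOccMk_eq_iff {U : Finset (Fin n)} {S S' : OccCarrier A U} :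
    occMk τ A U S = occMk τ A U S' ↔ OccEquiv τ A S.1 S'.1 := by
  unfold occMk
  refine Quot.eq.trans ?_
  exact Equivalence.eqvGen_iff
    ⟨fun S => myOccEquiv_refl τ A S.1, fun h => myOccEquiv_symm h, fun h h' => myOccEquiv_trans h h'⟩
end MyAux

section MyAux2
variable {n : ℕ} {τ : Equiv.Perm (Fin n)} {A : Finset (Fin n)}

lemma mySwap_lt_iff {m : ℕ} {P Q a b : Fin m}
    (ha : a = P ∨ (a ≠ P ∧ a ≠ Q ∧ ¬(min P Q < a ∧ a < max P Q)))
    (hb : b = P ∨ (b ≠ P ∧ b ≠ Q ∧ ¬(min P Q < b ∧ b < max P Q))) :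
    ((if a = P then Q else a) < (if b = P then Q else b)) ↔ a < b := by
  simp only [min_def, max_def] at ha hb
  split_ifs at * <;>
    simp only [Fin.lt_def, Fin.le_def, Fin.ext_iff, not_and, not_lt, ne_eq] at * <;>
    omega
end MyAux2

section MyAux3
variable {n : ℕ} {τ : Equiv.Perm (Fin n)} {A : Finset (Fin n)}

lemma myOccEquiv_swap {p q : Fin n} (hp : p ∉ A) (hq : q ∉ A) (hpq : p ≠ q)
    (hpos : ∀ a ∈ A, ¬(min p q < a ∧ a < max p q))
    (hval : ∀ a ∈ A, ¬(min (τ p) (τ q) < τ a ∧ τ a < max (τ p) (τ q))) :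
    OccEquiv τ A (insert p A) (insert q A) := by
  classical
  have hmem : ∀ x : Fin n, x ∈ insert p A → x ≠ p → x ∈ A := by
    intro x hx hxp
    rcases Finset.mem_insert.1 hx with h | h
    · exact absurd h hxp
    · exact h
  have hmem' : ∀ x : Fin n, x ∈ insert q A → x ≠ q → x ∈ A := by
    intro x hx hxq
    rcases Finset.mem_insert.1 hx with h | h
    · exact absurd h hxq
    · exact h
  let F : {x // x ∈ insert p A} → {x // x ∈ insert q A} := fun x =>
    if h : x.1 = p then ⟨q, Finset.mem_insert_self _ _⟩
    else ⟨x.1, Finset.mem_insert_of_mem (hmem x.1 x.2 h)⟩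
  let G : {x // x ∈ insert q A} → {x // x ∈ insert p A} := fun x =>
    if h : x.1 = q then ⟨p, Finset.mem_insert_self _ _⟩
    else ⟨x.1, Finset.mem_insert_of_mem (hmem' x.1 x.2 h)⟩
  have hFval : ∀ x : {x // x ∈ insert p A}, (F x).1 = if x.1 = p then q else x.1 := by
    intro x; by_cases h : x.1 = p <;> simp [F, h]
  have hGF : ∀ x, G (F x) = x := by
    intro x
    by_cases h : x.1 = p
    · apply Subtype.ext; simp [F, G, h]
    · have hxq : x.1 ≠ q := fun e => hq (e ▸ hmem x.1 x.2 h)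
      apply Subtype.ext; simp [F, G, h, hxq]
  have hFG : ∀ x, F (G x) = x := by
    intro x
    by_cases h : x.1 = q
    · apply Subtype.ext; simp [F, G, h]
    · have hxp : x.1 ≠ p := fun e => hp (e ▸ hmem' x.1 x.2 h)
      apply Subtype.ext; simp [F, G, h, hxp]
  have hcondP : ∀ x : {x // x ∈ insert p A},
      x.1 = p ∨ (x.1 ≠ p ∧ x.1 ≠ q ∧ ¬(min p q < x.1 ∧ x.1 < max p q)) := by
    intro x
    by_cases h : x.1 = p
    · exact Or.inl h
    · have hxA := hmem x.1 x.2 h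
      exact Or.inr ⟨h, fun e => hq (e ▸ hxA), hpos _ hxA⟩
  have hcondV : ∀ x : {x // x ∈ insert p A},
      τ x.1 = τ p ∨ (τ x.1 ≠ τ p ∧ τ x.1 ≠ τ q ∧
        ¬(min (τ p) (τ q) < τ x.1 ∧ τ x.1 < max (τ p) (τ q))) := by
    intro x
    by_cases h : x.1 = p
    · exact Or.inl (by rw [h])
    · have hxA := hmem x.1 x.2 h
      refine Or.inr ⟨fun e => h (τ.injective e), fun e => hq ((τ.injective e) ▸ hxA), hval _ hxA⟩
  have hlt : ∀ x y : {x // x ∈ insert p A}, F x < F y ↔ x < y := by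
    intro x y
    rw [← Subtype.coe_lt_coe, ← Subtype.coe_lt_coe, hFval, hFval]
    exact mySwap_lt_iff (hcondP x) (hcondP y)
  have hτF : ∀ x : {x // x ∈ insert p A},
      τ (F x).1 = if τ x.1 = τ p then τ q else τ x.1 := by
    intro x
    rw [hFval, apply_ite τ]
    congr 1
    simp only [eq_iff_iff]
    exact ⟨fun e => by rw [e], fun e => τ.injective e⟩
  refine ⟨{ toEquiv := ⟨F, G, hGF, hFG⟩, map_rel_iff' := ?_ }, ?_, ?_⟩
  · intro a b
    show F a ≤ F b ↔ a ≤ b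
    rw [← not_lt, ← not_lt, hlt b a]
  · intro a b
    show τ a.1 < τ b.1 ↔ τ (F a).1 < τ (F b).1
    rw [hτF, hτF]
    exact (mySwap_lt_iff (hcondV a) (hcondV b)).symm
  · intro a
    show a.1 ∈ A ↔ (F a).1 ∈ A
    rw [hFval]
    by_cases h : a.1 = p
    · simp [h, hp, hq]
    · simp [h]
end MyAux3

section MyAux4
variable {n : ℕ} {τ : Equiv.Perm (Fin n)} {A : Finset (Fin n)}

lemma myOccEquiv_fix {S S' : Finset (Fin n)} (hS : A ⊆ S) (hS' : A ⊆ S')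
    (g : {x // x ∈ S} ≃o {x // x ∈ S'})
    (hgA : ∀ a : {x // x ∈ S}, a.1 ∈ A ↔ (g a).1 ∈ A) :
    ∀ (a : {x // x ∈ S}), a.1 ∈ A → (g a).1 = a.1 := by
  classical
  let f1 : Fin A.card → Fin n := A.orderEmbOfFin rfl
  have hf1mem : ∀ i, f1 i ∈ A := fun i => Finset.orderEmbOfFin_mem A rfl i
  let f2 : Fin A.card → Fin n := fun i => (g ⟨f1 i, hS (hf1mem i)⟩).1
  have hf1 : StrictMono f1 := (A.orderEmbOfFin rfl).strictMono
  have hf2 : StrictMono f2 := by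
    intro i j hij
    exact Subtype.coe_lt_coe.2 (g.strictMono (Subtype.mk_lt_mk.2 (hf1 hij)))
  have hr1 : Set.range f1 = ↑A := Finset.range_orderEmbOfFin A rfl
  have hr2 : Set.range f2 = ↑A := by
    apply Set.Subset.antisymm
    · rintro x ⟨i, rfl⟩
      exact (hgA ⟨f1 i, hS (hf1mem i)⟩).1 (hf1mem i)
    · intro a ha
      have ha' : a ∈ A := ha
      set y := g.symm ⟨a, hS' ha'⟩ with hy
      have hgy : g y = ⟨a, hS' ha'⟩ := g.apply_symm_apply _
      have hyA : y.1 ∈ A := (hgA y).2 (by rw [hgy]; exact ha')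
      have : y.1 ∈ Set.range f1 := by rw [hr1]; exact hyA
      obtain ⟨i, hi⟩ := this
      refine ⟨i, ?_⟩
      show (g ⟨f1 i, hS (hf1mem i)⟩).1 = a
      have : (⟨f1 i, hS (hf1mem i)⟩ : {x // x ∈ S}) = y := Subtype.ext hi
      rw [this, hgy]
  have hf12 : f1 = f2 := (StrictMono.range_inj hf1 hf2).1 (hr1.trans hr2.symm)
  intro a ha
  have : a.1 ∈ Set.range f1 := by rw [hr1]; exact ha
  obtain ⟨i, hi⟩ := this
  have hae : a = ⟨f1 i, hS (hf1mem i)⟩ := Subtype.ext hi.symm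
  rw [hae]
  show f2 i = f1 i
  rw [← hf12]

lemma myOccEquiv_no_between {S S' : Finset (Fin n)} (hS : A ⊆ S) (hS' : A ⊆ S')
    (g : {x // x ∈ S} ≃o {x // x ∈ S'})
    (hgτ : ∀ a b : {x // x ∈ S}, τ a.1 < τ b.1 ↔ τ (g a).1 < τ (g b).1)
    (hgA : ∀ a : {x // x ∈ S}, a.1 ∈ A ↔ (g a).1 ∈ A)
    (z : {x // x ∈ S}) :
    (∀ a ∈ A, ¬(min z.1 (g z).1 < a ∧ a < max z.1 (g z).1)) ∧
    (∀ a ∈ A, ¬(min (τ z.1) (τ (g z).1) < τ a ∧ τ a < max (τ z.1) (τ (g z).1))) := by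
  have hfix := myOccEquiv_fix hS hS' g hgA
  constructor
  · rintro a ha ⟨h1, h2⟩
    have hga : (g ⟨a, hS ha⟩).1 = a := hfix _ ha
    rcases le_total z.1 (g z).1 with h | h
    · rw [min_eq_left h] at h1
      rw [max_eq_right h] at h2
      have h3 : (g z).1 < (g ⟨a, hS ha⟩).1 :=
        Subtype.coe_lt_coe.2 (g.strictMono (Subtype.coe_lt_coe.1 h1))
      rw [hga] at h3
      exact absurd h2 (not_lt.2 h3.le)
    · rw [min_eq_right h] at h1
      rw [max_eq_left h] at h2
      have h3 : (g ⟨a, hS ha⟩).1 < (g z).1 :=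
        Subtype.coe_lt_coe.2 (g.strictMono (Subtype.coe_lt_coe.1 h2))
      rw [hga] at h3
      exact absurd h1 (not_lt.2 h3.le)
  · rintro a ha ⟨h1, h2⟩
    have hga : (g ⟨a, hS ha⟩).1 = a := hfix _ ha
    rcases le_total (τ z.1) (τ (g z).1) with h | h
    · rw [min_eq_left h] at h1
      rw [max_eq_right h] at h2
      have h3 : τ (g z).1 < τ (g ⟨a, hS ha⟩).1 := (hgτ z ⟨a, hS ha⟩).1 h1
      rw [hga] at h3
      exact absurd h2 (not_lt.2 h3.le)
    · rw [min_eq_right h] at h1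
      rw [max_eq_left h] at h2
      have h3 : τ (g ⟨a, hS ha⟩).1 < τ (g z).1 := (hgτ ⟨a, hS ha⟩ z).1 h2
      rw [hga] at h3
      exact absurd h1 (not_lt.2 h3.le)
end MyAux4

section MyAux5
variable {n : ℕ} {τ : Equiv.Perm (Fin n)} {A : Finset (Fin n)}

lemma myEq_of_no_pair
    (hno : ∀ S : OccCarrier A (Finset.univ : Finset (Fin n)), ¬ HasAdjacentPair τ A S.1)
    {S S' : OccCarrier A (Finset.univ : Finset (Fin n))}
    (h : OccEquiv τ A S.1 S'.1) : S = S' := by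
  classical
  obtain ⟨g, hgτ, hgA⟩ := h
  have hS : A ⊆ S.1 := S.2.1
  have hS' : A ⊆ S'.1 := S'.2.1
  have hfixall : ∀ z : {x // x ∈ S.1}, (g z).1 = z.1 := by
    by_contra hcon
    push_neg at hcon
    obtain ⟨z, hz⟩ := hcon
    have hzA : z.1 ∉ A := fun hmem => hz (myOccEquiv_fix hS hS' g hgA z hmem)
    have hgzA : (g z).1 ∉ A := fun hmem => hzA ((hgA z).2 hmem)
    obtain ⟨hnb1, hnb2⟩ := myOccEquiv_no_between hS hS' g hgτ hgA z
    set p := z.1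
    set q := (g z).1
    refine hno ⟨insert p (insert q A), ?_, Finset.subset_univ _⟩ ?_
    · intro a ha
      exact Finset.mem_insert_of_mem (Finset.mem_insert_of_mem ha)
    · refine ⟨p, Finset.mem_insert_self _ _, q,
        Finset.mem_insert_of_mem (Finset.mem_insert_self _ _), hzA, hgzA,
        fun e => hz e.symm, ?_, ?_⟩
      · intro s hs
        rcases Finset.mem_insert.1 hs with rfl | hs
        · rintro ⟨h1, h2⟩
          rcases le_total p q with h | h
          · rw [min_eq_left h] at h1; exact absurd h1 (lt_irrefl _)
          · rw [max_eq_left h] at h2; exact absurd h2 (lt_irrefl _)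
        rcases Finset.mem_insert.1 hs with rfl | hs
        · rintro ⟨h1, h2⟩
          rcases le_total p q with h | h
          · rw [max_eq_right h] at h2; exact absurd h2 (lt_irrefl _)
          · rw [min_eq_right h] at h1; exact absurd h1 (lt_irrefl _)
        · exact hnb1 s hs
      · intro s hs
        rcases Finset.mem_insert.1 hs with rfl | hs
        · rintro ⟨h1, h2⟩
          rcases le_total (τ p) (τ q) with h | h
          · rw [min_eq_left h] at h1; exact absurd h1 (lt_irrefl _)
          · rw [max_eq_left h] at h2; exact absurd h2 (lt_irrefl _)
        rcases Finset.mem_insert.1 hs with rfl | hs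
        · rintro ⟨h1, h2⟩
          rcases le_total (τ p) (τ q) with h | h
          · rw [max_eq_right h] at h2; exact absurd h2 (lt_irrefl _)
          · rw [min_eq_right h] at h1; exact absurd h1 (lt_irrefl _)
        · exact hnb2 s hs
  -- now S.1 ⊆ S'.1 and cards equal
  have hsub : S.1 ⊆ S'.1 := by
    intro x hx
    have := (g ⟨x, hx⟩).2
    rw [hfixall ⟨x, hx⟩] at this
    exact this
  have hcard : S'.1.card = S.1.card := (OccEquiv.card_eq ⟨g, hgτ, hgA⟩).symm
  exact Subtype.ext (Finset.eq_of_subset_of_card_le hsub (le_of_eq hcard))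

lemma myBoolean_of_inj
    (hinj : ∀ S S' : OccCarrier A (Finset.univ : Finset (Fin n)),
      OccEquiv τ A S.1 S'.1 → S = S') :
    IsBooleanOccPoset τ A (Finset.univ : Finset (Fin n)) := by
  classical
  set U : Finset (Fin n) := Finset.univ with hU
  have hmkinj : Function.Injective (occMk τ A U) := fun S S' h =>
    hinj S S' (myOccMk_eq_iff.1 h)
  have hmksurj : Function.Surjective (occMk τ A U) := fun q => Quot.exists_rep q
  let E0 : OccCarrier A U ≃ OccPoset τ A U := Equiv.ofBijective _ ⟨hmkinj, hmksurj⟩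
  let m : ℕ := (Aᶜ : Finset (Fin n)).card
  let ψ : Fin m ↪o Fin n := (Aᶜ : Finset (Fin n)).orderEmbOfFin rfl
  have hψmem : ∀ i, ψ i ∉ A := fun i => by
    have := Finset.orderEmbOfFin_mem (Aᶜ : Finset (Fin n)) rfl i
    exact Finset.mem_compl.1 this
  have hψrange : ∀ x : Fin n, x ∉ A → ∃ i, ψ i = x := by
    intro x hx
    have : x ∈ Set.range ψ := by
      rw [Finset.range_orderEmbOfFin]
      simpa using hx
    exact this
  let F : OccCarrier A U → Finset (Fin m) := fun S =>
    Finset.univ.filter (fun i => ψ i ∈ S.1)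
  let G : Finset (Fin m) → OccCarrier A U := fun X =>
    ⟨A ∪ X.image (fun i => ψ i), Finset.subset_union_left, Finset.subset_univ _⟩
  have hGF : ∀ S, G (F S) = S := by
    intro S
    apply Subtype.ext
    ext x
    simp only [G, F, Finset.mem_union, Finset.mem_image, Finset.mem_filter,
      Finset.mem_univ, true_and]
    constructor
    · rintro (hx | ⟨i, hi, rfl⟩)
      · exact S.2.1 hx
      · exact hi
    · intro hx
      by_cases hxA : x ∈ A
      · exact Or.inl hxA
      · obtain ⟨i, rfl⟩ := hψrange x hxA
        exact Or.inr ⟨i, hx, rfl⟩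
  have hFG : ∀ X, F (G X) = X := by
    intro X
    ext i
    simp only [F, G, Finset.mem_filter, Finset.mem_univ, true_and, Finset.mem_union,
      Finset.mem_image]
    constructor
    · rintro (h | ⟨j, hj, hji⟩)
      · exact absurd h (hψmem i)
      · rwa [← ψ.injective hji]
    · intro h
      exact Or.inr ⟨i, h, rfl⟩
  have hFmono : ∀ S S' : OccCarrier A U, (F S ⊆ F S' ↔ S.1 ⊆ S'.1) := by
    intro S S'
    constructor
    · intro h x hx
      by_cases hxA : x ∈ A
      · exact S'.2.1 hxA
      · obtain ⟨i, rfl⟩ := hψrange x hxA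
        have : i ∈ F S := by simp [F, hx]
        have := h this
        simpa [F] using this
    · intro h i hi
      simp only [F, Finset.mem_filter, Finset.mem_univ, true_and] at hi ⊢
      exact h hi
  refine ⟨m, E0.symm.trans ⟨F, G, hGF, hFG⟩, ?_⟩
  intro q q'
  have hE0 : ∀ r, occMk τ A U (E0.symm r) = r := fun r => E0.apply_symm_apply r
  constructor
  · rintro ⟨S, S', hq, hq', hss⟩
    have h1 : E0.symm q = S := by
      apply hmkinj; rw [hE0, hq]
    have h2 : E0.symm q' = S' := by
      apply hmkinj; rw [hE0, hq']
    show F (E0.symm q) ⊆ F (E0.symm q')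
    rw [h1, h2]
    exact (hFmono S S').2 hss
  · intro h
    refine ⟨E0.symm q, E0.symm q', (hE0 q).symm, (hE0 q').symm, ?_⟩
    exact (hFmono _ _).1 h
end MyAux5

section MyAux6
variable {n : ℕ} {τ : Equiv.Perm (Fin n)} {A : Finset (Fin n)}

lemma myNotBoolean_of_pair {S0 : Finset (Fin n)} (hS0A : A ⊆ S0)
    (hpair : HasAdjacentPair τ A S0) :
    ¬ IsBooleanOccPoset τ A (Finset.univ : Finset (Fin n)) := by
  classical
  rintro ⟨m, e, he⟩
  obtain ⟨p, hpS, q, hqS, hpA, hqA, hpq, hpos, hval⟩ := hpair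
  have hposA : ∀ a ∈ A, ¬(min p q < a ∧ a < max p q) := fun a ha => hpos a (hS0A ha)
  have hvalA : ∀ a ∈ A, ¬(min (τ p) (τ q) < τ a ∧ τ a < max (τ p) (τ q)) :=
    fun a ha => hval a (hS0A ha)
  let Sb : OccCarrier A Finset.univ := ⟨A, subset_rfl, Finset.subset_univ _⟩
  let Sp : OccCarrier A Finset.univ :=
    ⟨insert p A, fun a ha => Finset.mem_insert_of_mem ha, Finset.subset_univ _⟩
  let Sq : OccCarrier A Finset.univ :=
    ⟨insert q A, fun a ha => Finset.mem_insert_of_mem ha, Finset.subset_univ _⟩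
  let Su : OccCarrier A Finset.univ :=
    ⟨insert p (insert q A),
      fun a ha => Finset.mem_insert_of_mem (Finset.mem_insert_of_mem ha),
      Finset.subset_univ _⟩
  set b := occMk τ A Finset.univ Sb with hbdef
  set v := occMk τ A Finset.univ Sp with hvdef
  set u := occMk τ A Finset.univ Su with hudef
  have hcard : ∀ (X Y : OccCarrier A Finset.univ), occMk τ A Finset.univ X = occMk τ A Finset.univ Y →
      X.1.card = Y.1.card := fun X Y h => OccEquiv.card_eq (myOccMk_eq_iff.1 h)
  have hpqA : p ∉ insert q A := by
    simp only [Finset.mem_insert]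
    push_neg
    exact ⟨hpq, hpA⟩
  have hSucard : Su.1.card = A.card + 2 := by
    show (insert p (insert q A)).card = A.card + 2
    rw [Finset.card_insert_of_notMem hpqA, Finset.card_insert_of_notMem hqA]
  have hv : occMk τ A Finset.univ Sq = v := by
    rw [hvdef]
    exact (myOccMk_eq_iff.2 (myOccEquiv_swap hpA hqA hpq hposA hvalA)).symm
  -- Claim: everything below u is b, v, or u
  have claim : ∀ r : OccPoset τ A Finset.univ, occLE τ A Finset.univ r u → r = b ∨ r = v ∨ r = u := by
    rintro r ⟨T, T', hT, hT', hsub⟩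
    have hequiv : OccEquiv τ A Su.1 T'.1 := myOccMk_eq_iff.1 hT'
    obtain ⟨g, hgτ, hgA⟩ := hequiv
    have hSuA : A ⊆ Su.1 := Su.2.1
    have hT'A : A ⊆ T'.1 := T'.2.1
    have hpSu : p ∈ Su.1 := Finset.mem_insert_self _ _
    have hqSu : q ∈ Su.1 := Finset.mem_insert_of_mem (Finset.mem_insert_self _ _)
    set x := (g ⟨p, hpSu⟩).1 with hxdef
    set y := (g ⟨q, hqSu⟩).1 with hydef
    have hxA : x ∉ A := fun h => hpA ((hgA _).2 h)
    have hyA : y ∉ A := fun h => hqA ((hgA _).2 h)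
    have hxy : x ≠ y := by
      intro h
      have h2 : (⟨p, hpSu⟩ : {z // z ∈ Su.1}) = ⟨q, hqSu⟩ := g.injective (Subtype.ext h)
      exact hpq (congrArg Subtype.val h2)
    have hxT' : x ∈ T'.1 := (g _).2
    have hyT' : y ∈ T'.1 := (g _).2
    have hT'card : T'.1.card = A.card + 2 := by
      rw [← OccEquiv.card_eq ⟨g, hgτ, hgA⟩, hSucard]
    have hxyA : x ∉ insert y A := by
      simp only [Finset.mem_insert]
      push_neg
      exact ⟨hxy, hxA⟩
    have hT'eq : T'.1 = insert x (insert y A) := by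
      refine (Finset.eq_of_subset_of_card_le ?_ ?_).symm
      · refine Finset.insert_subset hxT' (Finset.insert_subset hyT' hT'A)
      · rw [hT'card, Finset.card_insert_of_notMem hxyA, Finset.card_insert_of_notMem hyA]
    let Sx : OccCarrier A Finset.univ :=
      ⟨insert x A, fun a ha => Finset.mem_insert_of_mem ha, Finset.subset_univ _⟩
    let Sy : OccCarrier A Finset.univ :=
      ⟨insert y A, fun a ha => Finset.mem_insert_of_mem ha, Finset.subset_univ _⟩
    have hmkx : occMk τ A Finset.univ Sx = v := by
      by_cases hxp : x = p
      · have hSxSp : Sx = Sp := Subtype.ext (by show insert x A = insert p A; rw [hxp])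
        rw [hSxSp, hvdef]
      · obtain ⟨hnb1, hnb2⟩ := myOccEquiv_no_between hSuA hT'A g hgτ hgA ⟨p, hpSu⟩
        have hswap := myOccEquiv_swap hpA hxA (fun e' => hxp e'.symm) hnb1 hnb2
        rw [hvdef]
        exact (myOccMk_eq_iff.2 hswap).symm
    have hmky : occMk τ A Finset.univ Sy = v := by
      by_cases hyq : y = q
      · have hSySq : Sy = Sq := Subtype.ext (by show insert y A = insert q A; rw [hyq])
        rw [hSySq, hv]
      · obtain ⟨hnb1, hnb2⟩ := myOccEquiv_no_between hSuA hT'A g hgτ hgA ⟨q, hqSu⟩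
        have hswap := myOccEquiv_swap hqA hyA (fun e' => hyq e'.symm) hnb1 hnb2
        rw [← hv]
        exact (myOccMk_eq_iff.2 hswap).symm
    have hTsub : T.1 ⊆ insert x (insert y A) := hT'eq ▸ hsub
    have hTA : A ⊆ T.1 := T.2.1
    by_cases hxT : x ∈ T.1 <;> by_cases hyT : y ∈ T.1
    · right; right
      have hTeq : T = T' := by
        apply Subtype.ext
        rw [hT'eq]
        exact Finset.Subset.antisymm hTsub
          (Finset.insert_subset hxT (Finset.insert_subset hyT hTA))
      rw [hT, hTeq, ← hT']
    · right; left
      have hTeq : T = Sx := by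
        apply Subtype.ext
        show T.1 = insert x A
        refine Finset.Subset.antisymm ?_ (Finset.insert_subset hxT hTA)
        intro s hs
        rcases Finset.mem_insert.1 (hTsub hs) with rfl | hs'
        · exact Finset.mem_insert_self _ _
        rcases Finset.mem_insert.1 hs' with rfl | hs''
        · exact absurd hs hyT
        · exact Finset.mem_insert_of_mem hs''
      rw [hT, hTeq, hmkx]
    · right; left
      have hTeq : T = Sy := by
        apply Subtype.ext
        show T.1 = insert y A
        refine Finset.Subset.antisymm ?_ (Finset.insert_subset hyT hTA)
        intro s hs
        rcases Finset.mem_insert.1 (hTsub hs) with rfl | hs'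
        · exact absurd hs hxT
        rcases Finset.mem_insert.1 hs' with rfl | hs''
        · exact Finset.mem_insert_self _ _
        · exact Finset.mem_insert_of_mem hs''
      rw [hT, hTeq, hmky]
    · left
      have hTeq : T = Sb := by
        apply Subtype.ext
        show T.1 = A
        refine Finset.Subset.antisymm ?_ hTA
        intro s hs
        rcases Finset.mem_insert.1 (hTsub hs) with rfl | hs'
        · exact absurd hs hxT
        rcases Finset.mem_insert.1 hs' with rfl | hs''
        · exact absurd hs hyT
        · exact hs''
      rw [hT, hTeq, hbdef]
  -- e b is empty
  have hbot : ∀ r : OccPoset τ A Finset.univ, e b ⊆ e r := by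
    intro r
    obtain ⟨Sr, hSr⟩ := Quot.exists_rep r
    exact (he b r).1 ⟨Sb, Sr, rfl, hSr.symm, Sr.2.1⟩
  have hebe : e b = ∅ := by
    have h0 := hbot (e.symm ∅)
    rwa [e.apply_symm_apply, Finset.subset_empty] at h0
  -- distinctness
  have hbv : b ≠ v := by
    intro h
    have hc : A.card = (insert p A).card := hcard Sb Sp h
    rw [Finset.card_insert_of_notMem hpA] at hc
    omega
  have hvu : v ≠ u := by
    intro h
    have hc : (insert p A).card = (insert p (insert q A)).card := hcard Sp Su h
    rw [Finset.card_insert_of_notMem hpA, Finset.card_insert_of_notMem hpqA,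
      Finset.card_insert_of_notMem hqA] at hc
    omega
  -- chains
  have hlbv : occLE τ A Finset.univ b v :=
    ⟨Sb, Sp, rfl, rfl, fun a ha => Finset.mem_insert_of_mem ha⟩
  have hlvu : occLE τ A Finset.univ v u := by
    refine ⟨Sp, Su, rfl, rfl, ?_⟩
    intro s hs
    rcases Finset.mem_insert.1 hs with rfl | hs'
    · exact Finset.mem_insert_self _ _
    · exact Finset.mem_insert_of_mem (Finset.mem_insert_of_mem hs')
  have hsbv : e b ⊆ e v := (he _ _).1 hlbv
  have hsvu : e v ⊆ e u := (he _ _).1 hlvu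
  have hne_bv : e b ≠ e v := fun h => hbv (e.injective h)
  have hne_vu : e v ≠ e u := fun h => hvu (e.injective h)
  -- every subset of e u is one of the three
  have hsubsets : ∀ X : Finset (Fin m), X ⊆ e u → X = e b ∨ X = e v ∨ X = e u := by
    intro X hX
    have hle : occLE τ A Finset.univ (e.symm X) u := (he _ _).2 (by rwa [e.apply_symm_apply])
    rcases claim _ hle with h | h | h
    · left; rw [← h, e.apply_symm_apply]
    · right; left; rw [← h, e.apply_symm_apply]
    · right; right; rw [← h, e.apply_symm_apply]
  -- final contradiction
  have hvne : e v ≠ ∅ := fun h => hne_bv (by rw [h, hebe])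
  obtain ⟨x0, hx0⟩ := Finset.nonempty_iff_ne_empty.2 hvne
  have hx0t : x0 ∈ e u := hsvu hx0
  rcases hsubsets (e u \ e v) (Finset.sdiff_subset) with h | h | h
  · have h2 : e u ⊆ e v := by
      intro z hz
      by_contra hzv
      have : z ∈ e u \ e v := Finset.mem_sdiff.2 ⟨hz, hzv⟩
      rw [h, hebe] at this
      exact absurd this (Finset.notMem_empty _)
    exact hne_vu (Finset.Subset.antisymm hsvu h2)
  · have h2 : x0 ∈ e u \ e v := h.symm ▸ hx0
    exact (Finset.mem_sdiff.1 h2).2 hx0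
  · have h2 : x0 ∈ e u \ e v := h.symm ▸ hx0t
    exact (Finset.mem_sdiff.1 h2).2 hx0
end MyAux6


/-- the occurrence poset `[⟨σ⟩, τ]` is a boolean algebra if and only if at
no point are there letters `x` and `x + 1` adjacent in `ρ ∖ ⟨σ⟩` for some `ρ ∈ [⟨σ⟩, τ]`. -/
theorem occurrence_poset_boolean_iff_no_adjacent_pair {k n : ℕ}
    (σ : Equiv.Perm (Fin k)) (τ : Equiv.Perm (Fin n))
    (f : Fin k → Fin n) (hf : IsOccurrence σ τ f)
    (A : Finset (Fin n)) (hA : A = Finset.image f Finset.univ) :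
    IsBooleanOccPoset τ A Finset.univ ↔
      ∀ S : OccCarrier A Finset.univ, ¬ HasAdjacentPair τ A S.1 := by
  constructor
  · intro hbool S hpair
    exact myNotBoolean_of_pair S.2.1 hpair hbool
  · intro hno
    exact myBoolean_of_inj (fun S S' h => myEq_of_no_pair hno h)
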